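/- Let X, X_1, …, X_n be independent and identically distributed random variables with survival function F̄(x) = 1 for x < 0 and F̄(x) = 1/(⌊x⌋ + 2) for x ≥ 0 (the shifted discrete Pareto distribution). Then for every n ≥ 2, X ≤_st (X_1 + ⋯ + X_n)/n. -/

import Mathlib

open MeasureTheory ProbabilityTheory

lemma discretePareto_aux (n : ℕ) (hn : 2 ≤ n) (K b : ℝ)
    (hK : 0 ≤ K) (hb : 1 ≤ b) (hKb : K + 1 ≤ n * b) :
    ((K + 1) / (K + 2)) ^ n ≤ b / (b + 1) := by
  have hb0 : (0:ℝ) < b := lt_of_lt_of_le one_pos hb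
  have hn0 : (0:ℝ) < (n:ℝ) := by
    have : (0:ℕ) < n := by omega
    exact_mod_cast this
  have ha : (0:ℝ) < n * b := by positivity
  have h1 : (K + 1) / (K + 2) ≤ (n * b) / (n * b + 1) := by
    rw [div_le_div_iff₀ (by linarith) (by linarith)]
    nlinarith
  have h2 : ((n * b) / (n * b + 1)) ^ n ≤ b / (b + 1) := by
    have hbern : 1 + 1 / b ≤ (1 + 1 / (n * b)) ^ n := by
      have h := one_add_mul_le_pow (a := 1 / (n * b))
        (by have : (0:ℝ) ≤ 1 / (n * b) := by positivity
            linarith) n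
      have he : (n : ℝ) * (1 / (n * b)) = 1 / b := by field_simp
      rw [he] at h
      exact h
    have he : (n * b) / (n * b + 1) = (1 + 1 / (n * b))⁻¹ := by
      rw [inv_eq_one_div]
      rw [div_eq_div_iff (by linarith) (by positivity)]
      field_simp
    have h3 : b / (b + 1) = (1 + 1 / b)⁻¹ := by
      rw [inv_eq_one_div]
      rw [div_eq_div_iff (by linarith) (by positivity)]
      field_simp
    rw [he, inv_pow, h3]
    exact inv_anti₀ (by positivity) hbern
  calc ((K + 1) / (K + 2)) ^ n ≤ ((n * b) / (n * b + 1)) ^ n :=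
        pow_le_pow_left₀ (by positivity) h1 n
    _ ≤ b / (b + 1) := h2

/-- for iid shifted discrete Pareto risks, the single risk `X = X 0` is
smaller than the average `(X_1 + ⋯ + X_n)/n` in first-order stochastic dominance,
for every `n ≥ 2`. The family `X 0, X 1, …, X n` is iid, `X 0` playing the role of
the reference risk `X`. -/
theorem discretePareto_average_dominates
    {Ω : Type*} [MeasurableSpace Ω] (P : Measure Ω) [IsProbabilityMeasure P]
    (n : ℕ) (hn : 2 ≤ n)
    (X : Fin (n + 1) → Ω → ℝ) (hXmeas : ∀ i, Measurable (X i))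
    (hIndep : iIndepFun X P)
    (hsurv : ∀ i, ∀ x : ℝ,
      P {ω | X i ω > x} =
        ENNReal.ofReal (if x < 0 then 1 else 1 / ((⌊x⌋ : ℝ) + 2))) :
    ∀ x : ℝ,
      P {ω | X 0 ω > x} ≤ P {ω | (∑ i : Fin n, X i.succ ω) / n > x} := by
  intro x
  have hn0 : (0:ℝ) < (n:ℝ) := by
    have : (0:ℕ) < n := by omega
    exact_mod_cast this
  set S : Set Ω := {ω | (∑ i : Fin n, X i.succ ω) / n > x} with hS
  -- each X i is a.s. nonnegative
  have hzero : ∀ i : Fin (n+1), P {ω | X i ω < 0} = 0 := by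
    intro i
    have hsub : {ω | X i ω < 0} ⊆ ⋃ m : ℕ, {ω | X i ω > -(1/(m+1))}ᶜ := by
      intro ω hω
      simp only [Set.mem_setOf_eq] at hω
      obtain ⟨m, hm⟩ := exists_nat_one_div_lt (by linarith : (0:ℝ) < -X i ω)
      refine Set.mem_iUnion.2 ⟨m, ?_⟩
      simp only [Set.mem_compl_iff, Set.mem_setOf_eq, not_lt]
      push_cast at hm ⊢
      linarith
    refine measure_mono_null hsub (measure_iUnion_null fun m => ?_)
    have hmeas : MeasurableSet {ω | X i ω > -(1/(m+1))} :=
      measurableSet_lt measurable_const (hXmeas i)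
    rw [prob_compl_eq_one_sub hmeas, hsurv i]
    rw [if_pos (by
      have : (0:ℝ) < 1/((m:ℝ)+1) := by positivity
      linarith : -(1/((m:ℝ)+1)) < 0)]
    simp
  set N : Set Ω := ⋃ j : Fin n, {ω | X j.succ ω < 0} with hNdef
  have hNnull : P N = 0 := measure_iUnion_null fun j => hzero j.succ
  have hnonneg : ∀ ω, ω ∉ N → ∀ j : Fin n, 0 ≤ X j.succ ω := by
    intro ω hω j
    by_contra h
    exact hω (Set.mem_iUnion.2 ⟨j, by simpa using lt_of_not_ge h⟩)
  by_cases hx : x < 0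
  · -- negative threshold : RHS has probability one
    have hUnivSub : (Set.univ : Set Ω) ⊆ S ∪ N := by
      intro ω _
      by_cases hω : ω ∈ N
      · exact Or.inr hω
      · left
        have hsum : 0 ≤ ∑ i : Fin n, X i.succ ω :=
          Finset.sum_nonneg fun i _ => hnonneg ω hω i
        have : 0 ≤ (∑ i : Fin n, X i.succ ω) / n := div_nonneg hsum hn0.le
        show x < _
        linarith
    calc P {ω | X 0 ω > x} ≤ 1 := prob_le_one
      _ = P Set.univ := measure_univ.symm
      _ ≤ P (S ∪ N) := measure_mono hUnivSub
      _ ≤ P S + P N := measure_union_le _ _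
      _ = P S := by rw [hNnull, add_zero]
  · -- nonnegative threshold
    push_neg at hx
    set c : ℝ := (n:ℝ) * x with hc
    have hc0 : 0 ≤ c := mul_nonneg hn0.le hx
    set K : ℝ := ((⌊c⌋ : ℤ) : ℝ) with hK
    have hK0 : 0 ≤ K := by
      have h := Int.floor_nonneg.2 hc0
      rw [hK]
      exact_mod_cast h
    set b : ℝ := ((⌊x⌋ : ℤ) : ℝ) + 1 with hb
    have hb1 : 1 ≤ b := by
      have : (0:ℤ) ≤ ⌊x⌋ := Int.floor_nonneg.2 hx
      have : (0:ℝ) ≤ ((⌊x⌋ : ℤ) : ℝ) := by exact_mod_cast this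
      linarith
    have hKb : K + 1 ≤ n * b := by
      have hlt : c < (((n:ℤ) * (⌊x⌋ + 1) : ℤ) : ℝ) := by
        push_cast
        have := Int.lt_floor_add_one x
        calc c = (n:ℝ) * x := rfl
          _ < (n:ℝ) * (((⌊x⌋ : ℤ) : ℝ) + 1) := by
              exact (mul_lt_mul_iff_right₀ hn0).2 this
          _ = _ := by ring
      have hfl : ⌊c⌋ < (n:ℤ) * (⌊x⌋ + 1) := Int.floor_lt.2 hlt
      have hfl' : ⌊c⌋ + 1 ≤ (n:ℤ) * (⌊x⌋ + 1) := hfl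
      have : ((⌊c⌋ + 1 : ℤ) : ℝ) ≤ (((n:ℤ) * (⌊x⌋ + 1) : ℤ) : ℝ) := by exact_mod_cast hfl'
      push_cast at this
      rw [hK, hb]
      push_cast
      linarith
    set q : ℝ := (K + 1) / (K + 2) with hq
    have hq0 : 0 ≤ q := by
      apply div_nonneg <;> linarith
    have hq1 : q ≤ 1 := by
      rw [hq, div_le_one (by linarith)]
      linarith
    -- the intersection of the complements
    set C : Set Ω := ⋂ i : Fin n, X i.succ ⁻¹' Set.Iic c with hC
    have hCmeas : MeasurableSet C :=
      MeasurableSet.iInter fun i => (hXmeas _) measurableSet_Iic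
    -- each factor
    have hfac : ∀ i : Fin (n+1), P (X i ⁻¹' Set.Iic c) = ENNReal.ofReal q := by
      intro i
      have hseteq : X i ⁻¹' Set.Iic c = {ω | X i ω > c}ᶜ := by
        ext ω
        simp [not_lt]
      rw [hseteq, prob_compl_eq_one_sub (measurableSet_lt measurable_const (hXmeas i)),
        hsurv i, if_neg (not_lt.2 hc0)]
      have h1 : q = 1 - 1 / (K + 2) := by
        rw [hq]
        field_simp
        ring
      rw [h1, ENNReal.ofReal_sub _ (by positivity), ENNReal.ofReal_one]
    -- independence gives the product formula
    have hprod : P C = ENNReal.ofReal (q ^ n) := by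
      have hind := hIndep.measure_inter_preimage_eq_mul
        (Finset.univ.map ⟨Fin.succ, Fin.succ_injective n⟩)
        (sets := fun _ => Set.Iic c) (fun i _ => measurableSet_Iic)
      have hset : (⋂ i ∈ Finset.univ.map ⟨Fin.succ, Fin.succ_injective n⟩,
          X i ⁻¹' Set.Iic c) = C := by
        ext ω
        simp only [Set.mem_iInter, hC, Finset.mem_map, Finset.mem_univ, true_and,
          Function.Embedding.coeFn_mk]
        constructor
        · intro h j
          exact h j.succ ⟨j, rfl⟩
        · rintro h i ⟨j, rfl⟩
          exact h j
      rw [hset] at hind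
      rw [hind, Finset.prod_map]
      simp only [Function.Embedding.coeFn_mk]
      rw [Finset.prod_congr rfl (fun j _ => hfac j.succ), Finset.prod_const,
        Finset.card_univ, Fintype.card_fin, ENNReal.ofReal_pow hq0]
    -- the complement of C is (a.s.) contained in S
    have hsub : Cᶜ ⊆ S ∪ N := by
      intro ω hω
      by_cases hN : ω ∈ N
      · exact Or.inr hN
      · left
        have : ∃ i : Fin n, ¬ X i.succ ω ∈ Set.Iic c := by
          by_contra h
          push_neg at h
          exact hω (Set.mem_iInter.2 h)
        obtain ⟨i, hi⟩ := this
        have hic : c < X i.succ ω := by simpa [Set.mem_Iic, not_le] using hi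
        have hsum : X i.succ ω ≤ ∑ j : Fin n, X j.succ ω :=
          Finset.single_le_sum (fun j _ => hnonneg ω hN j) (Finset.mem_univ i)
        show x < (∑ j : Fin n, X j.succ ω) / n
        rw [lt_div_iff₀ hn0]
        calc x * n = c := by rw [hc]; ring
          _ < X i.succ ω := hic
          _ ≤ _ := hsum
    -- key numeric inequality
    have hkey : 1 / (((⌊x⌋ : ℤ) : ℝ) + 2) ≤ 1 - q ^ n := by
      have haux := discretePareto_aux n hn K b hK0 hb1 hKb
      have hb0 : (0:ℝ) < b := lt_of_lt_of_le one_pos hb1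
      have h2 : b / (b + 1) = 1 - 1 / (b + 1) := by field_simp; ring
      have h3 : 1 / (((⌊x⌋ : ℤ) : ℝ) + 2) = 1 / (b + 1) := by rw [hb]; ring_nf
      rw [h3]
      rw [hq]
      rw [h2] at haux
      linarith [haux]
    calc P {ω | X 0 ω > x}
        = ENNReal.ofReal (1 / (((⌊x⌋ : ℤ) : ℝ) + 2)) := by
          rw [hsurv 0 x, if_neg (not_lt.2 hx)]
      _ ≤ ENNReal.ofReal (1 - q ^ n) := ENNReal.ofReal_le_ofReal hkey
      _ = 1 - ENNReal.ofReal (q ^ n) := by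
          rw [ENNReal.ofReal_sub _ (by positivity), ENNReal.ofReal_one]
      _ = 1 - P C := by rw [hprod]
      _ = P Cᶜ := (prob_compl_eq_one_sub hCmeas).symm
      _ ≤ P (S ∪ N) := measure_mono hsub
      _ ≤ P S + P N := measure_union_le _ _
      _ = P S := by rw [hNnull, add_zero]
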